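/- Let G be a finite simple graph with a distinguished vertex v, and let G' be a finite simple graph with two distinct vertices v' and w' such that v' and w' are adjacent to each other and each of v', w' is adjacent to every other vertex of G'. Let G'' be the graph obtained by taking the disjoint union of G and G' and identifying v with v'. Then the number of independent sets of G'' containing w' equals b(G,v), and the number of independent sets of G'' not containing w' equals a(G,v) + i(G' − v' − w')·b(G,v), where G' − v' − w' is the induced subgraph of G' on the vertices other than v' and w'. -/

import Mathlib

/-- The number of independent sets of a simple graph `G`
(including the empty set). -/
noncomputable def numIndep {V : Type*} (G : SimpleGraph V) : ℕ :=
  Nat.card {s : Set V // ∀ x ∈ s, ∀ y ∈ s, ¬ G.Adj x y}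

/-- The number of independent sets of `G` containing the vertex `v`. -/
noncomputable def aCount {V : Type*} (G : SimpleGraph V) (v : V) : ℕ :=
  Nat.card {s : Set V // v ∈ s ∧ ∀ x ∈ s, ∀ y ∈ s, ¬ G.Adj x y}

/-- The number of independent sets of `G` not containing the vertex `v`
(including the empty set). -/
noncomputable def bCount {V : Type*} (G : SimpleGraph V) (v : V) : ℕ :=
  Nat.card {s : Set V // v ∉ s ∧ ∀ x ∈ s, ∀ y ∈ s, ¬ G.Adj x y}

/-- The graph obtained from the disjoint union of `G` and `G'` by identifying
`v ∈ V(G)` with `v' ∈ V(G')`.  Its vertex set is `V ⊕ {x : V' // x ≠ v'}`,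
where `Sum.inl v` plays the role of the merged vertex. -/
def glue {V V' : Type*} (G : SimpleGraph V) (v : V) (G' : SimpleGraph V')
    (v' : V') : SimpleGraph (V ⊕ {x : V' // x ≠ v'}) where
  Adj a b :=
    match a, b with
    | Sum.inl a, Sum.inl b => G.Adj a b
    | Sum.inl a, Sum.inr b => a = v ∧ G'.Adj v' b.1
    | Sum.inr a, Sum.inl b => b = v ∧ G'.Adj v' a.1
    | Sum.inr a, Sum.inr b => G'.Adj a.1 b.1
  symm := by
    refine ⟨?_⟩
    rintro (a | a) (b | b) h
    · exact G.adj_symm h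
    · exact h
    · exact h
    · exact G'.adj_symm h
  loopless := by
    refine ⟨?_⟩
    rintro (a | a) h
    exacts [G.irrefl h, G'.irrefl h]


private theorem glue_part1 {V V' : Type*} [Fintype V] [Fintype V']
    (G : SimpleGraph V) (v : V) (G' : SimpleGraph V') (v' w' : V')
    (hne : v' ≠ w') (hadj : G'.Adj v' w')
    (hdom : ∀ x : V', x ≠ v' → x ≠ w' → G'.Adj v' x ∧ G'.Adj w' x) :
    aCount (glue G v G' v') (Sum.inr ⟨w', hne.symm⟩) = bCount G v := by
  classical
  apply Nat.card_congr
  refine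
    { toFun := fun s => ⟨{a | Sum.inl a ∈ s.1}, ?_, ?_⟩
      invFun := fun t =>
        ⟨{x | match x with
             | Sum.inl a => a ∈ t.1
             | Sum.inr b => b = (⟨w', hne.symm⟩ : {x : V' // x ≠ v'})}, ?_, ?_⟩
      left_inv := ?_
      right_inv := ?_ }
  · exact fun hv => s.2.2 _ hv _ s.2.1 ⟨rfl, hadj⟩
  · exact fun x hx y hy hxy => s.2.2 _ hx _ hy hxy
  · exact rfl
  · rintro (a | a) ha (b | b) hb hab
    · exact t.2.2 a ha b hb hab
    · exact t.2.1 (hab.1 ▸ ha)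
    · exact t.2.1 (hab.1 ▸ hb)
    · simp only [Set.mem_setOf_eq] at ha hb
      subst ha; subst hb
      exact G'.irrefl hab
  · rintro ⟨s, hw, hind⟩
    apply Subtype.ext
    apply Set.ext
    rintro (a | b)
    · exact Iff.rfl
    · simp only [Set.mem_setOf_eq]
      constructor
      · rintro rfl; exact hw
      · intro hb
        by_cases hbw : b.1 = w'
        · exact Subtype.ext hbw
        · exact absurd ((hdom b.1 b.2 hbw).2) (fun h => hind _ hw _ hb h)
  · rintro ⟨t, hv, hind⟩
    apply Subtype.ext
    apply Set.ext
    intro a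
    exact Iff.rfl

private theorem glue_part2 {V V' : Type*} [Fintype V] [Fintype V']
    (G : SimpleGraph V) (v : V) (G' : SimpleGraph V') (v' w' : V')
    (hne : v' ≠ w') (hadj : G'.Adj v' w')
    (hdom : ∀ x : V', x ≠ v' → x ≠ w' → G'.Adj v' x ∧ G'.Adj w' x) :
    bCount (glue G v G' v') (Sum.inr ⟨w', hne.symm⟩) =
      aCount G v +
        numIndep (G'.induce {x : V' | x ≠ v' ∧ x ≠ w'}) * bCount G v := by
  classical
  set w'' : {x : V' // x ≠ v'} := ⟨w', hne.symm⟩ with hw''def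
  -- key fact: if `inl v` is in an independent set, no `inr` vertex is
  have key : ∀ s : Set (V ⊕ {x : V' // x ≠ v'}),
      (∀ x ∈ s, ∀ y ∈ s, ¬ (glue G v G' v').Adj x y) →
      Sum.inl v ∈ s → ∀ b : {x : V' // x ≠ v'}, Sum.inr b ∉ s := by
    intro s hind hv b hb
    refine hind _ hv _ hb ⟨rfl, ?_⟩
    by_cases hbw : b.1 = w'
    · exact hbw ▸ hadj
    · exact (hdom b.1 b.2 hbw).1
  -- split according to whether `inl v` belongs to the set
  have e0 := (Equiv.sumCompl (fun s : {s : Set (V ⊕ {x : V' // x ≠ v'}) //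
      Sum.inr w'' ∉ s ∧ ∀ x ∈ s, ∀ y ∈ s, ¬ (glue G v G' v').Adj x y} =>
      Sum.inl v ∈ s.1)).symm
  rw [show bCount (glue G v G' v') (Sum.inr w'') = Nat.card _ from rfl,
    Nat.card_congr e0, Nat.card_sum]
  congr 1
  · -- sets containing `inl v` ↔ aCount G v
    apply Nat.card_congr
    refine
      { toFun := fun s => ⟨{a | Sum.inl a ∈ s.1.1}, s.2, ?_⟩
        invFun := fun t =>
          ⟨⟨{x | match x with
               | Sum.inl a => a ∈ t.1
               | Sum.inr _ => False}, ?_, ?_⟩, ?_⟩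
        left_inv := ?_
        right_inv := ?_ }
    · exact fun x hx y hy hxy => s.1.2.2 _ hx _ hy hxy
    · exact fun h => h
    · rintro (a | a) ha (b | b) hb hab
      · exact t.2.2 a ha b hb hab
      · exact hb
      · exact ha
      · exact ha
    · exact t.2.1
    · rintro ⟨⟨s, hw, hind⟩, hv⟩
      apply Subtype.ext
      apply Subtype.ext
      apply Set.ext
      rintro (a | b)
      · exact Iff.rfl
      · simp only [Set.mem_setOf_eq, false_iff]
        exact key s hind hv b
    · rintro ⟨t, hv, hind⟩
      apply Subtype.ext
      apply Set.ext
      intro a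
      exact Iff.rfl
  · -- sets not containing `inl v` ↔ product
    rw [show numIndep (G'.induce {x : V' | x ≠ v' ∧ x ≠ w'}) * bCount G v =
        Nat.card ({u : Set {x : V' | x ≠ v' ∧ x ≠ w'} //
            ∀ x ∈ u, ∀ y ∈ u, ¬ (G'.induce {x : V' | x ≠ v' ∧ x ≠ w'}).Adj x y} ×
          {t : Set V // v ∉ t ∧ ∀ x ∈ t, ∀ y ∈ t, ¬ G.Adj x y}) from
      (Nat.card_prod _ _).symm]
    apply Nat.card_congr
    refine
      { toFun := fun s =>
          (⟨{c | Sum.inr ⟨c.1, c.2.1⟩ ∈ s.1.1}, ?_⟩,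
           ⟨{a | Sum.inl a ∈ s.1.1}, s.2, ?_⟩)
        invFun := fun p =>
          ⟨⟨{x | match x with
               | Sum.inl a => a ∈ p.2.1
               | Sum.inr b => ∃ h : b.1 ≠ w',
                   (⟨b.1, ⟨b.2, h⟩⟩ : {x : V' | x ≠ v' ∧ x ≠ w'}) ∈ p.1.1},
            ?_, ?_⟩, ?_⟩
        left_inv := ?_
        right_inv := ?_ }
    · exact fun x hx y hy hxy => s.1.2.2 _ hx _ hy hxy
    · exact fun x hx y hy hxy => s.1.2.2 _ hx _ hy hxy
    · rintro ⟨h, -⟩; exact h rfl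
    · rintro (a | a) ha (b | b) hb hab
      · exact p.2.2.2 a ha b hb hab
      · exact p.2.2.1 (hab.1 ▸ ha)
      · exact p.2.2.1 (hab.1 ▸ hb)
      · obtain ⟨haw, hma⟩ := ha
        obtain ⟨hbw, hmb⟩ := hb
        exact p.1.2 _ hma _ hmb hab
    · exact fun h => p.2.2.1 h
    · rintro ⟨⟨s, hw, hind⟩, hv⟩
      apply Subtype.ext
      apply Subtype.ext
      apply Set.ext
      rintro (a | b)
      · exact Iff.rfl
      · simp only [Set.mem_setOf_eq]
        constructor
        · rintro ⟨h, hm⟩; exact hm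
        · intro hb
          refine ⟨fun hbw => hw ?_, hb⟩
          rwa [show w'' = b from Subtype.ext hbw.symm]
    · rintro ⟨u, t⟩
      refine Prod.ext ?_ ?_
      · apply Subtype.ext
        apply Set.ext
        intro c
        simp only [Set.mem_setOf_eq]
        constructor
        · rintro ⟨h, hm⟩; exact hm
        · intro hm; exact ⟨c.2.2, hm⟩
      · apply Subtype.ext
        apply Set.ext
        intro a
        exact Iff.rfl

theorem glue_indep_counts {V V' : Type*} [Fintype V] [Fintype V']
    (G : SimpleGraph V) (v : V) (G' : SimpleGraph V') (v' w' : V')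
    (hne : v' ≠ w') (hadj : G'.Adj v' w')
    (hdom : ∀ x : V', x ≠ v' → x ≠ w' → G'.Adj v' x ∧ G'.Adj w' x) :
    aCount (glue G v G' v') (Sum.inr ⟨w', hne.symm⟩) = bCount G v ∧
    bCount (glue G v G' v') (Sum.inr ⟨w', hne.symm⟩) =
      aCount G v +
        numIndep (G'.induce {x : V' | x ≠ v' ∧ x ≠ w'}) * bCount G v :=
  ⟨glue_part1 G v G' v' w' hne hadj hdom, glue_part2 G v G' v' w' hne hadj hdom⟩
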